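/- An analytic subset A of a Polish space is uncountable if and only if A contains a nonempty perfect subset. -/

import Mathlib

open Set Metric Topology Filter


/-- In a second countable space, an uncountable set has two distinct condensation points. -/
lemma aux_two_cond {Y : Type*} [TopologicalSpace Y] [SecondCountableTopology Y] {S : Set Y}
    (h : ¬ S.Countable) :
    ∃ x₀ ∈ S, ∃ x₁ ∈ S, x₀ ≠ x₁ ∧
      (∀ V : Set Y, IsOpen V → x₀ ∈ V → ¬ (S ∩ V).Countable) ∧
      (∀ V : Set Y, IsOpen V → x₁ ∈ V → ¬ (S ∩ V).Countable) := by
  set T : Set Y := {x ∈ S | ∀ V : Set Y, IsOpen V → x ∈ V → ¬ (S ∩ V).Countable} with hT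
  obtain ⟨b, bct, -, hb⟩ := TopologicalSpace.exists_countable_basis Y
  have hdiff : (S \ T).Countable := by
    have hsub : S \ T ⊆ ⋃ V ∈ {V ∈ b | (S ∩ V).Countable}, S ∩ V := by
      rintro x ⟨hxS, hxT⟩
      simp only [hT, mem_setOf_eq, not_and, not_forall] at hxT
      obtain ⟨V, hVo, hxV, hVc⟩ := hxT hxS
      rw [not_not] at hVc
      obtain ⟨W, hWb, hxW, hWV⟩ := hb.exists_subset_of_mem_open hxV hVo
      exact mem_biUnion ⟨hWb, hVc.mono (inter_subset_inter_right _ hWV)⟩ ⟨hxS, hxW⟩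
    refine Countable.mono hsub ?_
    exact Countable.biUnion (bct.mono (sep_subset _ _)) fun V hV => hV.2
  have hTunc : ¬ T.Countable := fun hTc => h <| by
    have : S ⊆ (S \ T) ∪ T := fun x hx => by
      by_cases hxT : x ∈ T
      · exact Or.inr hxT
      · exact Or.inl ⟨hx, hxT⟩
    exact (hdiff.union hTc).mono this
  have hnsub : ¬ T.Subsingleton := fun hs => hTunc hs.countable
  rw [Set.not_subsingleton_iff] at hnsub
  obtain ⟨x₀, hx₀, x₁, hx₁, hne⟩ := hnsub
  exact ⟨x₀, hx₀.1, x₁, hx₁.1, hne, hx₀.2, hx₁.2⟩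

/-- Shrinking lemma: inside an open set with uncountable image one can find a small ball
whose closure is contained in the open set and whose image is still uncountable. -/
lemma aux_shrink {N : Type*} [MetricSpace N] [SecondCountableTopology N] {Y : Type*}
    (g : N → Y) {U : Set N} (hU : IsOpen U) (h : ¬ (g '' U).Countable) {ε : ℝ} (hε : 0 < ε) :
    ∃ c r, 0 < r ∧ r ≤ ε ∧ closure (ball c r) ⊆ U ∧ ¬ (g '' ball c r).Countable := by
  have hδ : ∀ x : U, ∃ r : ℝ, 0 < r ∧ r ≤ ε ∧ closure (ball (x : N) r) ⊆ U := by
    rintro ⟨x, hx⟩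
    obtain ⟨δ, hδpos, hδsub⟩ := Metric.isOpen_iff.1 hU x hx
    refine ⟨min (δ/2) ε, lt_min (by linarith) hε, min_le_right _ _, ?_⟩
    refine (closure_ball_subset_closedBall).trans ?_
    refine (Metric.closedBall_subset_ball ?_).trans hδsub
    exact lt_of_le_of_lt (min_le_left _ _) (by linarith)
  choose rr hrpos hrle hrsub using hδ
  have hcover : U ⊆ ⋃ x : U, ball (x : N) (rr x) := fun x hx =>
    mem_iUnion.2 ⟨⟨x, hx⟩, mem_ball_self (hrpos _)⟩
  obtain ⟨Tc, hTc, hTeq⟩ := TopologicalSpace.isOpen_iUnion_countable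
    (fun x : U => ball (x : N) (rr x)) (fun _ => isOpen_ball)
  by_contra hcon
  push_neg at hcon
  apply h
  have : g '' U ⊆ ⋃ x ∈ Tc, g '' ball (x : N) (rr x) := by
    rintro y ⟨x, hx, rfl⟩
    have hx2 := hcover hx
    rw [← hTeq] at hx2
    simp only [mem_iUnion] at hx2 ⊢
    obtain ⟨i, hi, hxi⟩ := hx2
    exact ⟨i, hi, mem_image_of_mem g hxi⟩
  refine Countable.mono this (Countable.biUnion hTc fun x hx => ?_)
  exact hcon x.1 (rr x) (hrpos x) (hrle x) (hrsub x)

lemma aux_step {N : Type*} [MetricSpace N] [SecondCountableTopology N] {Y : Type*}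
    [TopologicalSpace Y] [T2Space Y] [SecondCountableTopology Y]
    (g : N → Y) (hg : Continuous g) (U : Set N) (hU : IsOpen U)
    (h : ¬ (g '' U).Countable) (ε : ℝ) (hε : 0 < ε) :
    ∃ (c : Bool → N) (r : Bool → ℝ) (W : Bool → Set Y),
      (∀ b, 0 < r b ∧ r b ≤ ε ∧ closure (ball (c b) (r b)) ⊆ U ∧
        closure (ball (c b) (r b)) ⊆ g ⁻¹' (W b) ∧ ¬ (g '' ball (c b) (r b)).Countable) ∧
      Disjoint (W false) (W true) := by
  obtain ⟨x₀, hx₀, x₁, hx₁, hne, hc₀, hc₁⟩ := aux_two_cond h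
  obtain ⟨W₀, W₁, hW₀, hW₁, hxW₀, hxW₁, hWd⟩ := t2_separation hne
  have key : ∀ (W : Set Y), IsOpen W → ¬ ((g '' U) ∩ W).Countable →
      ∃ c r, 0 < r ∧ r ≤ ε ∧ closure (ball c r) ⊆ U ∧
        closure (ball c r) ⊆ g ⁻¹' W ∧ ¬ (g '' ball c r).Countable := by
    intro W hWo hWc
    have hopen : IsOpen (U ∩ g ⁻¹' W) := hU.inter (hWo.preimage hg)
    have himg : ¬ (g '' (U ∩ g ⁻¹' W)).Countable := by
      intro hcc
      apply hWc
      refine hcc.mono ?_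
      rintro y ⟨⟨x, hxU, rfl⟩, hyW⟩
      exact ⟨x, ⟨hxU, hyW⟩, rfl⟩
    obtain ⟨c, r, h1, h2, h3, h4⟩ := aux_shrink g hopen himg hε
    refine ⟨c, r, h1, h2, h3.trans inter_subset_left, ?_, h4⟩
    exact h3.trans ((inter_subset_right).trans (preimage_mono Subset.rfl))
  obtain ⟨cf, rf, h1f, h2f, h3f, h4f, h5f⟩ := key W₀ hW₀ (hc₀ W₀ hW₀ hxW₀)
  obtain ⟨ct, rt, h1t, h2t, h3t, h4t, h5t⟩ := key W₁ hW₁ (hc₁ W₁ hW₁ hxW₁)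
  refine ⟨fun b => bif b then ct else cf, fun b => bif b then rt else rf,
    fun b => bif b then W₁ else W₀, ?_, ?_⟩
  · rintro (_ | _)
    · exact ⟨h1f, h2f, h3f, h4f, h5f⟩
    · exact ⟨h1t, h2t, h3t, h4t, h5t⟩
  · simpa using hWd

lemma aux_cyl_open (y : ℕ → Bool) (n : ℕ) : IsOpen {y' : ℕ → Bool | ∀ i < n, y' i = y i} := by
  have : {y' : ℕ → Bool | ∀ i < n, y' i = y i}
      = ⋂ i ∈ Finset.range n, (fun y' : ℕ → Bool => y' i) ⁻¹' {y i} := by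
    ext y'; simp [Finset.mem_range]
  rw [this]
  exact isOpen_biInter_finset fun i _ => (continuous_apply i).isOpen_preimage _ (isOpen_discrete _)

theorem aux_inj {N : Type*} [MetricSpace N] [CompleteSpace N] [SecondCountableTopology N]
    {Y : Type*} [TopologicalSpace Y] [T2Space Y] [SecondCountableTopology Y]
    (g : N → Y) (hg : Continuous g) (h : ¬ (Set.range g).Countable) :
    ∃ H : (ℕ → Bool) → Y, Continuous H ∧ Function.Injective H ∧ Set.range H ⊆ Set.range g := by
  choose c r W hprops hdisj using fun (U : Set N) (hU : IsOpen U) (hc : ¬ (g '' U).Countable)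
    (n : ℕ) => aux_step g hg U hU hc ((1/2 : ℝ)^n) (by positivity)
  have hruniv : ¬ (g '' univ).Countable := by rwa [image_univ]
  obtain ⟨c₀, r₀, hr₀pos, hr₀le, -, hr₀unc⟩ := aux_shrink g isOpen_univ hruniv one_pos
  let P := {p : N × ℝ // 0 < p.2 ∧ ¬ (g '' ball p.1 p.2).Countable}
  let child : P → ℕ → Bool → P := fun p n b =>
    ⟨(c (ball p.1.1 p.1.2) isOpen_ball p.2.2 n b, r (ball p.1.1 p.1.2) isOpen_ball p.2.2 n b),
      (hprops (ball p.1.1 p.1.2) isOpen_ball p.2.2 n b).1,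
      (hprops (ball p.1.1 p.1.2) isOpen_ball p.2.2 n b).2.2.2.2⟩
  let root : P := ⟨(c₀, r₀), hr₀pos, hr₀unc⟩
  let F : (ℕ → Bool) → ℕ → P := fun y n => Nat.rec root (fun m p => child p m (y m)) n
  have hFs : ∀ y n, F y (n+1) = child (F y n) n (y n) := fun _ _ => rfl
  have hchild : ∀ (p : P) (n : ℕ) (b : Bool),
      0 < (child p n b).1.2 ∧ (child p n b).1.2 ≤ (1/2 : ℝ)^n ∧
      closure (ball (child p n b).1.1 (child p n b).1.2) ⊆ ball p.1.1 p.1.2 ∧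
      closure (ball (child p n b).1.1 (child p n b).1.2)
        ⊆ g ⁻¹' (W (ball p.1.1 p.1.2) isOpen_ball p.2.2 n b) := by
    intro p n b
    obtain ⟨h1, h2, h3, h4, -⟩ := hprops (ball p.1.1 p.1.2) isOpen_ball p.2.2 n b
    exact ⟨h1, h2, h3, h4⟩
  have hagree : ∀ (n : ℕ) (y y' : ℕ → Bool), (∀ i < n, y i = y' i) → F y n = F y' n := by
    intro n
    induction n with
    | zero => intro y y' _; rfl
    | succ n ih =>
      intro y y' hyy
      rw [hFs, hFs, ih y y' (fun i hi => hyy i (hi.trans (Nat.lt_succ_self n))),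
        hyy n (Nat.lt_succ_self n)]
  have hrle : ∀ y n, (F y n).1.2 ≤ 2 * (1/2 : ℝ)^n := by
    intro y n
    cases n with
    | zero => exact hr₀le.trans (by norm_num : (1:ℝ) ≤ 2 * (1/2 : ℝ)^0)
    | succ n =>
      rw [hFs]
      refine (hchild (F y n) n (y n)).2.1.trans ?_
      rw [pow_succ]
      ring_nf
      exact le_refl _
  have hsub : ∀ y n m, n ≤ m →
      ball (F y m).1.1 (F y m).1.2 ⊆ ball (F y n).1.1 (F y n).1.2 := by
    intro y n m hnm
    induction m, hnm using Nat.le_induction with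
    | base => exact Subset.rfl
    | succ m _ ih =>
      refine subset_trans ?_ ih
      rw [hFs]
      exact subset_closure.trans (hchild (F y m) m (y m)).2.2.1
  have hmem : ∀ y n m, n ≤ m → (F y m).1.1 ∈ ball (F y n).1.1 (F y n).1.2 :=
    fun y n m hnm => hsub y n m hnm (mem_ball_self (F y m).2.1)
  have hcauchy : ∀ y, CauchySeq (fun n => (F y n).1.1) := by
    intro y
    refine cauchySeq_of_le_geometric (1/2) 2 (by norm_num) (fun n => ?_)
    have h1 := hmem y n (n+1) (Nat.le_succ n)
    rw [mem_ball] at h1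
    rw [dist_comm]
    exact h1.le.trans (hrle y n)
  choose σ hσ using fun y => cauchySeq_tendsto_of_complete (hcauchy y)
  have hσcl : ∀ y n, σ y ∈ closure (ball (F y n).1.1 (F y n).1.2) := by
    intro y n
    exact mem_closure_of_tendsto (hσ y) (eventually_atTop.2 ⟨n, fun m hm => hmem y n m hm⟩)
  have hσdist : ∀ (n : ℕ) (y y' : ℕ → Bool), (∀ i < n, y i = y' i) →
      dist (σ y) (σ y') ≤ 4 * (1/2 : ℝ)^n := by
    intro n y y' hyy
    have e := hagree n y y' hyy
    have h1 := closure_ball_subset_closedBall (hσcl y n)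
    have h2 := closure_ball_subset_closedBall (hσcl y' n)
    rw [e] at h1
    rw [mem_closedBall] at h1 h2
    calc dist (σ y) (σ y') ≤ dist (σ y) (F y' n).1.1 + dist (σ y') (F y' n).1.1 :=
          dist_triangle_right _ _ _
      _ ≤ 2 * (1/2:ℝ)^n + 2 * (1/2:ℝ)^n := add_le_add (h1.trans (hrle y' n)) (h2.trans (hrle y' n))
      _ = 4 * (1/2:ℝ)^n := by ring
  have hσcont : Continuous σ := by
    rw [continuous_iff_continuousAt]
    intro y
    rw [ContinuousAt, Metric.tendsto_nhds]
    intro ε hε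
    obtain ⟨n, hn⟩ := exists_pow_lt_of_lt_one (by positivity : (0:ℝ) < ε/4)
      (by norm_num : (1/2:ℝ) < 1)
    have hmemn : {y' : ℕ → Bool | ∀ i < n, y' i = y i} ∈ 𝓝 y :=
      (aux_cyl_open y n).mem_nhds (fun i _ => rfl)
    filter_upwards [hmemn] with y' hy'
    have := hσdist n y' y hy'
    linarith
  have hWmem : ∀ (y : ℕ → Bool) (n : ℕ),
      g (σ y) ∈ W (ball (F y n).1.1 (F y n).1.2) isOpen_ball (F y n).2.2 n (y n) := by
    intro y n
    have h1 := hσcl y (n+1)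
    rw [hFs] at h1
    exact (hchild (F y n) n (y n)).2.2.2 h1
  have hinj : Function.Injective (g ∘ σ) := by
    intro y y' heq
    by_contra hne
    have hex : ∃ i, y i ≠ y' i := by
      by_contra hcon
      push_neg at hcon
      exact hne (funext hcon)
    set n := Nat.find hex with hn
    have hns := Nat.find_spec hex
    have hlt : ∀ i < n, y i = y' i := fun i hi => not_not.1 (Nat.find_min hex hi)
    have e : F y n = F y' n := hagree n y y' hlt
    have m1 := hWmem y n
    have m2 := hWmem y' n
    rw [← e] at m2
    have hd := hdisj (ball (F y n).1.1 (F y n).1.2) isOpen_ball (F y n).2.2 n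
    rw [Function.comp_apply, Function.comp_apply] at heq
    rw [← heq] at m2
    cases hyb : y n <;> cases hyb' : y' n
    · exact hns (hyb.trans hyb'.symm)
    · rw [hyb] at m1; rw [hyb'] at m2
      exact Set.disjoint_left.1 hd m1 m2
    · rw [hyb] at m1; rw [hyb'] at m2
      exact Set.disjoint_left.1 hd m2 m1
    · exact hns (hyb.trans hyb'.symm)
  exact ⟨g ∘ σ, hg.comp hσcont, hinj, by rintro _ ⟨y, rfl⟩; exact ⟨σ y, rfl⟩⟩


/-- An analytic subset `A` of a Polish space is uncountable if and only if `A`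
contains a nonempty perfect subset (a nonempty closed set without isolated points). -/
theorem stmt_7 (X : Type) [TopologicalSpace X] [PolishSpace X]
    (A : Set X) (hA : MeasureTheory.AnalyticSet A) :
    ¬ A.Countable ↔
      ∃ P : Set X, P ⊆ A ∧ P.Nonempty ∧ IsClosed P ∧
        ∀ x ∈ P, ∀ U : Set X, IsOpen U → x ∈ U → ∃ y ∈ P ∩ U, y ≠ x := by
  constructor
  · intro hunc
    rw [MeasureTheory.AnalyticSet] at hA
    rcases hA with he | ⟨f, hf, hfr⟩
    · exact absurd (he ▸ countable_empty) hunc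
    letI := TopologicalSpace.upgradeIsCompletelyMetrizable X
    letI := TopologicalSpace.upgradeIsCompletelyMetrizable (ℕ → ℕ)
    have hr : ¬ (Set.range f).Countable := by rwa [hfr]
    obtain ⟨H, hHc, hHi, hHr⟩ := aux_inj f hf hr
    refine ⟨Set.range H, by rwa [hfr] at hHr, ⟨H (fun _ => false), mem_range_self _⟩,
      (isCompact_range hHc).isClosed, ?_⟩
    rintro x ⟨y, rfl⟩ U hU hxU
    have hopen : IsOpen (H ⁻¹' U) := hU.preimage hHc
    obtain ⟨I, u, hu, hsub⟩ := isOpen_pi_iff.1 hopen y hxU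
    set n := (I.sup id) + 1 with hn
    set y' : ℕ → Bool := fun i => if i = n then !(y n) else y i with hy'
    have hy'I : y' ∈ (I : Set ℕ).pi u := by
      intro i hi
      have hiI : i ∈ I := hi
      have hile : i ≤ I.sup id := Finset.le_sup (f := id) hiI
      have hine : i ≠ n := by omega
      simp only [hy', if_neg hine]
      exact (hu i hiI).2
    have hy'U : H y' ∈ U := hsub hy'I
    have hy'ne : y' ≠ y := by
      intro hcon
      have := congrFun hcon n
      simp only [hy', if_pos rfl] at this
      exact (Bool.not_ne_self (y n)) this
    exact ⟨H y', ⟨⟨y', rfl⟩, hy'U⟩, fun hcon => hy'ne (hHi hcon)⟩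
  · rintro ⟨P, hPA, hPne, hPcl, hPacc⟩ hAc
    have hpre : Preperfect P := by
      rw [preperfect_iff_nhds]
      intro x hx U hU
      obtain ⟨V, hVU, hVo, hxV⟩ := mem_nhds_iff.1 hU
      obtain ⟨z, hz, hzx⟩ := hPacc x hx V hVo hxV
      exact ⟨z, ⟨hVU hz.2, hz.1⟩, hzx⟩
    have hPerf : Perfect P := ⟨hPcl, hpre⟩
    letI := TopologicalSpace.upgradeIsCompletelyMetrizable X
    obtain ⟨Fc, hFr, -, hFi⟩ := hPerf.exists_nat_bool_injection hPne
    have hc : (Set.range Fc).Countable := (hAc.mono hPA).mono hFr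
    have hcb : Countable (ℕ → Bool) := by
      have := hc.to_subtype
      exact Countable.of_equiv _ (Equiv.ofInjective Fc hFi).symm
    have h2 : Countable (Set ℕ) :=
      Countable.of_equiv _ (Equiv.arrowCongr (Equiv.refl ℕ) Equiv.propEquivBool.symm)
    rw [countable_iff_exists_injective] at h2
    obtain ⟨φ, hφ⟩ := h2
    exact Function.cantor_injective φ hφ
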